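/- Let r ≥ 0. Define families A^r of 2^(r+1) subsets of [2^r] recursively by: A^0 = {∅, {1}}; and for r > 0, with A^{r−1} = {A_1, ..., A_{2^r}}, set A_i^r = A_i ∪ (A_i + 2^{r−1}) for 1 ≤ i ≤ 2^r and A_{i+2^r}^r = A_i ∪ (([2^{r−1}] \ A_i) + 2^{r−1}). Then for every subset S ⊆ [2^{r+1}] with |S| ≤ r, the cardinality of ∩_{i∈S} A_i^r is divisible by 2^{r−|S|}. -/

import Mathlib

/-- The recursive family A^r of 2^(r+1) subsets of [2^r]: A^0 = {∅, {1}}, and A^r is built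
from A^(r-1) by doubling and complement-doubling on the shifted copy of the universe. -/
def recFam : ℕ → List (Finset ℕ)
  | 0 => [∅, {1}]
  | (r + 1) =>
      ((recFam r).map fun A => A ∪ A.image (· + 2 ^ r)) ++
      ((recFam r).map fun A => A ∪ ((Finset.Icc 1 (2 ^ r) \ A).image (· + 2 ^ r)))

def cb (b : Bool) : ZMod 2 := if b then 1 else 0

def Lf (r a y : ℕ) : ZMod 2 := ∑ k ∈ Finset.range r, cb (a.testBit k) * cb (y.testBit k)

lemma Lf_succ (r a y : ℕ) : Lf (r+1) a y = Lf r a y + cb (a.testBit r) * cb (y.testBit r) :=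
  Finset.sum_range_succ _ r

lemma Lf_y_mod (r a y : ℕ) : Lf r a (y % 2^r) = Lf r a y := by
  refine Finset.sum_congr rfl fun k hk => ?_
  rw [Nat.testBit_mod_two_pow]
  simp [Finset.mem_range.mp hk]

lemma Lf_a_mod (r a y : ℕ) : Lf r (a % 2^r) y = Lf r a y := by
  refine Finset.sum_congr rfl fun k hk => ?_
  rw [Nat.testBit_mod_two_pow]
  simp [Finset.mem_range.mp hk]

lemma cb_xor (b c : Bool) : cb (b ^^ c) = cb b + cb c := by
  cases b <;> cases c <;> decide

lemma Lf_xor (r a b y : ℕ) : Lf r (a ^^^ b) y = Lf r a y + Lf r b y := by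
  simp only [Lf, Nat.testBit_xor, cb_xor, add_mul, Finset.sum_add_distrib]

lemma testBit_high {z r : ℕ} (h : z < 2^r) : (z + 2^r).testBit r = true := by
  rw [Nat.testBit_eq_decide_div_mod_eq]
  rw [Nat.add_div_right _ (Nat.pow_pos (n := r) (by norm_num)), Nat.div_eq_of_lt h]
  rfl

lemma filter_range_split (n : ℕ) (P : ℕ → Prop) [DecidablePred P] :
    ((Finset.range (2^(n+1))).filter P).card
      = ((Finset.range (2^n)).filter P).card
        + ((Finset.range (2^n)).filter fun z => P (2^n + z)).card := by
  have h : (2:ℕ)^(n+1) = 2^n + 2^n := by ring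
  rw [h, Finset.range_add, Finset.filter_union, Finset.card_union_of_disjoint, Finset.filter_map,
    Finset.card_map]
  · rfl
  · refine Finset.disjoint_left.mpr fun x hx hx' => ?_
    simp only [Finset.mem_filter, Finset.mem_range, Finset.mem_map, addLeftEmbedding_apply] at hx hx'
    obtain ⟨⟨y, hy, rfl⟩, -⟩ := hx'
    omega

lemma zmod2_cases (x y : ZMod 2) : x = y ∨ x = y + 1 := by revert x y; decide

lemma zmod2_ne (x : ZMod 2) : x ≠ x + 1 := by revert x; decide

lemma zmod2_cancel (x y z : ZMod 2) : x + z = y + z ↔ x = y := by revert x y z; decide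

lemma count_aux (r : ℕ) : ∀ (F : Finset ℕ) (a : ℕ → ℕ) (t : ℕ → ZMod 2),
    2^(r - F.card) ∣ ((Finset.range (2^r)).filter fun y => ∀ i ∈ F, Lf r (a i) y = t i).card := by
  induction r with
  | zero => intro F a t; simp
  | succ r ih =>
    intro F a t
    rw [filter_range_split]
    by_cases hB : ∃ i₀ ∈ F, (a i₀).testBit r = true
    · obtain ⟨i₀, hi₀, hbit⟩ := hB
      set F' := F.erase i₀ with hF'
      set a' : ℕ → ℕ := fun i => if (a i).testBit r then a i ^^^ a i₀ else a i with ha'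
      set t' : ℕ → ZMod 2 := fun i => if (a i).testBit r then t i + t i₀ else t i with ht'
      -- rewrite the two half-counts
      have hlow : ∀ z ∈ Finset.range (2^r),
          ((∀ i ∈ F, Lf (r+1) (a i) z = t i) ↔
            ((∀ i ∈ F', Lf r (a' i) z = t' i) ∧ Lf r (a i₀) z = t i₀)) := by
        intro z hz
        rw [Finset.mem_range] at hz
        have hzb : z.testBit r = false := Nat.testBit_lt_two_pow hz
        have hL : ∀ i, Lf (r+1) (a i) z = Lf r (a i) z := by
          intro i; rw [Lf_succ, hzb]; simp [cb]
        constructor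
        · intro h
          have hpiv := h i₀ hi₀
          rw [hL] at hpiv
          refine ⟨fun i hi => ?_, hpiv⟩
          have hiF := Finset.mem_of_mem_erase hi
          have := h i hiF
          rw [hL] at this
          by_cases hb : (a i).testBit r
          · simp only [ha', ht', hb, if_true, Lf_xor, this, hpiv]
          · have hb' : (a i).testBit r = false := by simpa using hb
            simpa [ha', ht', hb'] using this
        · rintro ⟨h, hpiv⟩
          intro i hi
          rw [hL]
          by_cases hii : i = i₀
          · rw [hii]; exact hpiv
          · have hi' : i ∈ F' := Finset.mem_erase.mpr ⟨hii, hi⟩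
            have := h i hi'
            by_cases hb : (a i).testBit r
            · simp only [ha', ht', hb, if_true, Lf_xor, hpiv] at this
              rwa [zmod2_cancel] at this
            · have hb' : (a i).testBit r = false := by simpa using hb
              simpa [ha', ht', hb'] using this
      have hhigh : ∀ z ∈ Finset.range (2^r),
          ((∀ i ∈ F, Lf (r+1) (a i) (2^r + z) = t i) ↔
            ((∀ i ∈ F', Lf r (a' i) z = t' i) ∧ Lf r (a i₀) z = t i₀ + 1)) := by
        intro z hz
        rw [Finset.mem_range] at hz
        have hzb : (2^r + z).testBit r = true := by rw [Nat.add_comm]; exact testBit_high hz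
        have hL : ∀ i, Lf (r+1) (a i) (2^r + z) = Lf r (a i) z + cb ((a i).testBit r) := by
          intro i
          rw [Lf_succ, hzb, ← Lf_y_mod r (a i) (2^r + z), Nat.add_mod_left,
            Nat.mod_eq_of_lt hz]
          simp [cb]
        constructor
        · intro h
          have hpiv := h i₀ hi₀
          rw [hL, hbit] at hpiv
          have hpiv' : Lf r (a i₀) z = t i₀ + 1 := by
            rw [← hpiv]; show _ = _ + 1 + 1
            generalize Lf r (a i₀) z = u; revert u; decide
          refine ⟨fun i hi => ?_, hpiv'⟩
          have hiF := Finset.mem_of_mem_erase hi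
          have hh := h i hiF
          rw [hL] at hh
          by_cases hb : (a i).testBit r
          · simp only [ha', ht', hb, if_true, Lf_xor, hpiv']
            rw [hb] at hh
            have : Lf r (a i) z = t i + 1 := by
              rw [← hh]; show _ = _ + 1 + 1
              generalize Lf r (a i) z = u; revert u; decide
            rw [this]
            generalize t i = u; generalize t i₀ = v; revert u v; decide
          · have hb' : (a i).testBit r = false := by simpa using hb
            rw [hb'] at hh
            simpa [ha', ht', hb', cb] using hh
        · rintro ⟨h, hpiv⟩
          intro i hi
          rw [hL]
          by_cases hii : i = i₀
          · rw [hii, hbit, hpiv]; simp [cb]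
            generalize t i₀ = u; revert u; decide
          · have hi' : i ∈ F' := Finset.mem_erase.mpr ⟨hii, hi⟩
            have hh := h i hi'
            by_cases hb : (a i).testBit r
            · simp only [ha', ht', hb, if_true, Lf_xor, hpiv] at hh
              rw [hb]
              have : Lf r (a i) z = t i + t i₀ + (t i₀ + 1) := by
                rw [← hh]; generalize Lf r (a i) z = u; generalize t i₀ = v
                revert u v; decide
              rw [this]; simp [cb]
              generalize t i = u; generalize t i₀ = v; revert u v; decide
            · have hb' : (a i).testBit r = false := by simpa using hb
              simp only [ha', ht', hb', Bool.false_eq_true, if_false] at hh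
              rw [hb', hh]; simp [cb]
      rw [Finset.filter_congr hlow, Finset.filter_congr hhigh]
      have hunion :
          ((Finset.range (2^r)).filter fun z => (∀ i ∈ F', Lf r (a' i) z = t' i) ∧ Lf r (a i₀) z = t i₀)
          ∪ ((Finset.range (2^r)).filter fun z => (∀ i ∈ F', Lf r (a' i) z = t' i) ∧ Lf r (a i₀) z = t i₀ + 1)
          = (Finset.range (2^r)).filter fun z => ∀ i ∈ F', Lf r (a' i) z = t' i := by
        rw [← Finset.filter_or]
        refine Finset.filter_congr fun z hz => ?_
        constructor
        · rintro (⟨h, -⟩ | ⟨h, -⟩) <;> exact h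
        · intro h
          rcases zmod2_cases (Lf r (a i₀) z) (t i₀) with h' | h'
          · exact Or.inl ⟨h, h'⟩
          · exact Or.inr ⟨h, h'⟩
      have hdisj : Disjoint
          ((Finset.range (2^r)).filter fun z => (∀ i ∈ F', Lf r (a' i) z = t' i) ∧ Lf r (a i₀) z = t i₀)
          ((Finset.range (2^r)).filter fun z => (∀ i ∈ F', Lf r (a' i) z = t' i) ∧ Lf r (a i₀) z = t i₀ + 1) := by
        refine Finset.disjoint_left.mpr fun z hz hz' => ?_
        simp only [Finset.mem_filter] at hz hz'
        exact zmod2_ne (t i₀) (hz.2.2 ▸ hz'.2.2)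
      have hsum := Finset.card_union_of_disjoint hdisj
      rw [hunion] at hsum
      rw [← hsum]
      have hdvd := ih F' a' t'
      have hcard : F'.card = F.card - 1 := Finset.card_erase_of_mem hi₀
      have hpos : 1 ≤ F.card := Finset.card_pos.mpr ⟨i₀, hi₀⟩
      refine dvd_trans (pow_dvd_pow 2 ?_) hdvd
      omega
    · push_neg at hB
      have hL : ∀ i ∈ F, ∀ y, Lf (r+1) (a i) y = Lf r (a i) (y % 2^r) := by
        intro i hi y
        rw [Lf_succ, Lf_y_mod]
        have : (a i).testBit r = false := by
          cases h : (a i).testBit r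
          · rfl
          · exact absurd h (by simpa using hB i hi)
        rw [this]; simp [cb]
      have e1 : ∀ z ∈ Finset.range (2^r),
          ((∀ i ∈ F, Lf (r+1) (a i) z = t i) ↔ (∀ i ∈ F, Lf r (a i) z = t i)) := by
        intro z hz
        rw [Finset.mem_range] at hz
        constructor <;> intro h i hi <;>
          [skip; skip] <;>
          · have := h i hi
            first
            | (rw [hL i hi, Nat.mod_eq_of_lt hz] at this; exact this)
            | (rw [hL i hi, Nat.mod_eq_of_lt hz]; exact this)
      have e2 : ∀ z ∈ Finset.range (2^r),
          ((∀ i ∈ F, Lf (r+1) (a i) (2^r + z) = t i) ↔ (∀ i ∈ F, Lf r (a i) z = t i)) := by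
        intro z hz
        rw [Finset.mem_range] at hz
        constructor <;> intro h i hi
        · have := h i hi
          rw [hL i hi, Nat.add_mod_left, Nat.mod_eq_of_lt hz] at this; exact this
        · rw [hL i hi, Nat.add_mod_left, Nat.mod_eq_of_lt hz]; exact h i hi
      rw [Finset.filter_congr e1, Finset.filter_congr e2]
      have hdvd := ih F a t
      obtain ⟨c, hc⟩ := hdvd
      rw [hc, ← two_mul, ← mul_assoc]
      have : (2:ℕ) * 2^(r - F.card) = 2^(r - F.card + 1) := by ring
      rw [this]
      exact Dvd.dvd.mul_right (pow_dvd_pow 2 (by omega)) c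

lemma recFam_length (r : ℕ) : (recFam r).length = 2^(r+1) := by
  induction r with
  | zero => rfl
  | succ r ih => simp [recFam, ih]; ring

lemma recFam_subset (r : ℕ) : ∀ A ∈ recFam r, A ⊆ Finset.Icc 1 (2^r) := by
  induction r with
  | zero =>
    intro A hA
    simp only [recFam, List.mem_cons, List.mem_singleton] at hA
    rcases hA with rfl | rfl | h
    · exact Finset.empty_subset _
    · intro x hx; simp at hx; simp [hx]
    · simp at h
  | succ r ih =>
    intro A hA
    simp only [recFam, List.mem_append, List.mem_map] at hA
    have hsub : (2:ℕ)^r ≤ 2^(r+1) := by ring_nf; omega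
    rcases hA with ⟨B, hB, rfl⟩ | ⟨B, hB, rfl⟩ <;>
    · intro x hx
      rw [Finset.mem_union] at hx
      rw [Finset.mem_Icc]
      rcases hx with hx | hx
      · have := ih B hB hx
        rw [Finset.mem_Icc] at this
        constructor
        · exact this.1
        · omega
      · rw [Finset.mem_image] at hx
        obtain ⟨b, hb, rfl⟩ := hx
        first
        | (have := ih B hB hb; rw [Finset.mem_Icc] at this; constructor <;> [omega; (show b + 2^r ≤ 2^(r+1); ring_nf; omega)])
        | (rw [Finset.mem_sdiff, Finset.mem_Icc] at hb; constructor <;> [omega; (show b + 2^r ≤ 2^(r+1); ring_nf; omega)])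

lemma mem_recFam (r : ℕ) : ∀ i < 2^(r+1), ∀ y < 2^r,
    ((y+1) ∈ (recFam r).getD i ∅ ↔ Lf r (i/2) y = 1 + cb (i.testBit 0)) := by
  induction r with
  | zero =>
    intro i hi y hy
    interval_cases y
    interval_cases i <;> simp [recFam, Lf, cb] <;> decide
  | succ r ih =>
    intro i hi y hy
    have hlen : i < (recFam (r+1)).length := by rw [recFam_length]; exact hi
    rw [List.getD_eq_getElem _ _ hlen]
    have hlen1 : ((recFam r).map fun A => A ∪ A.image (· + 2 ^ r)).length = 2^(r+1) := by
      simp [recFam_length]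
    by_cases hfirst : i < 2^(r+1)
    · have h1 : i < ((recFam r).map fun A => A ∪ A.image (· + 2 ^ r)).length := by omega
      have : (recFam (r+1))[i] = ((recFam r).map fun A => A ∪ A.image (· + 2 ^ r))[i] := by
        show ((_ ++ _ : List (Finset ℕ)))[i] = _
        exact List.getElem_append_left h1
      rw [this, List.getElem_map]
      have hri : i < (recFam r).length := by rw [recFam_length]; omega
      have hA : (recFam r)[i] = (recFam r).getD i ∅ := (List.getD_eq_getElem _ _ hri).symm
      rw [hA]
      set A := (recFam r).getD i ∅ with hAdef
      have hAsub : A ⊆ Finset.Icc 1 (2^r) := recFam_subset r _ (hA ▸ List.getElem_mem hri)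
      have hp : (2:ℕ)^(r+1) = 2*2^r := by ring
      have hi2 : i/2 < 2^r := by omega
      have hbitr : (i/2).testBit r = false := Nat.testBit_lt_two_pow hi2
      have hcb0 : cb ((i/2).testBit r) = 0 := by rw [hbitr]; rfl
      rw [Lf_succ, hcb0, zero_mul, add_zero, Finset.mem_union]
      by_cases hylt : y < 2^r
      · have himage : (y+1) ∉ A.image (· + 2^r) := by
          rw [Finset.mem_image]
          rintro ⟨b, hb, hbe⟩
          have := hAsub hb
          rw [Finset.mem_Icc] at this
          omega
        constructor
        · rintro (h | h)
          · exact (ih i hfirst y hylt).mp h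
          · exact absurd h himage
        · intro h
          exact Or.inl ((ih i hfirst y hylt).mpr h)
      · set z := y - 2^r with hzdef
        have hzlt : z < 2^r := by omega
        have hyz : y = 2^r + z := by omega
        have hnotA : (y+1) ∉ A := by
          intro h
          have := hAsub h
          rw [Finset.mem_Icc] at this
          omega
        have himg : ((y+1) ∈ A.image (· + 2^r)) ↔ (z+1) ∈ A := by
          rw [Finset.mem_image]
          constructor
          · rintro ⟨b, hb, hbe⟩
            have hbz : b = z + 1 := by omega
            rwa [← hbz]
          · intro h
            exact ⟨z+1, h, by show z + 1 + 2^r = y + 1; omega⟩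
        have hmod : Lf r (i/2) y = Lf r (i/2) z := by
          rw [← Lf_y_mod r (i/2) y, hyz, Nat.add_mod_left, Nat.mod_eq_of_lt hzlt]
        rw [hmod]
        constructor
        · rintro (h | h)
          · exact absurd h hnotA
          · exact (ih i hfirst z hzlt).mp (himg.mp h)
        · intro h
          exact Or.inr (himg.mpr ((ih i hfirst z hzlt).mpr h))
    · have hp : (2:ℕ)^(r+1) = 2*2^r := by ring
      set j := i - 2^(r+1) with hjdef
      have hjlt : j < 2^(r+1) := by omega
      have hile : ((recFam r).map fun A => A ∪ A.image (· + 2 ^ r)).length ≤ i := by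
        rw [hlen1]; omega
      have hstep : (recFam (r+1))[i]'hlen
          = ((_ ++ _ : List (Finset ℕ)))[i]'hlen := rfl
      rw [hstep]; erw [List.getElem_append_right hile]
      have hidx : i - ((recFam r).map fun A => A ∪ A.image (· + 2 ^ r)).length = j := by
        rw [hlen1]
      simp only [hidx, List.getElem_map]
      have hrj : j < (recFam r).length := by rw [recFam_length]; omega
      have hA : (recFam r)[j] = (recFam r).getD j ∅ := (List.getD_eq_getElem _ _ hrj).symm
      rw [hA]
      set A := (recFam r).getD j ∅ with hAdef
      have hAsub : A ⊆ Finset.Icc 1 (2^r) := recFam_subset r _ (hA ▸ List.getElem_mem hrj)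
      have hieq : i = j + 2^(r+1) := by omega
      have hb0 : i.testBit 0 = j.testBit 0 := by
        have hmod2 : i % 2 = j % 2 := by omega
        rw [Nat.testBit_eq_decide_div_mod_eq, Nat.testBit_eq_decide_div_mod_eq, pow_zero, Nat.div_one, Nat.div_one,
          hmod2]
      have hdiv : i/2 = j/2 + 2^r := by omega
      have hj2 : j/2 < 2^r := by omega
      have hLa : ∀ w, Lf r (i/2) w = Lf r (j/2) w := by
        intro w
        rw [← Lf_a_mod r (i/2) w, hdiv, Nat.add_mod_right, Nat.mod_eq_of_lt hj2]
      have hbitr : (i/2).testBit r = true := by rw [hdiv]; exact testBit_high hj2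
      have hcb1 : cb ((i/2).testBit r) = 1 := by rw [hbitr]; rfl
      rw [Lf_succ, hcb1, one_mul, hLa, hb0, Finset.mem_union]
      by_cases hylt : y < 2^r
      · have hycb : cb (y.testBit r) = 0 := by rw [Nat.testBit_lt_two_pow hylt]; rfl
        rw [hycb, add_zero]
        have himage : (y+1) ∉ (Finset.Icc 1 (2^r) \ A).image (· + 2^r) := by
          rw [Finset.mem_image]
          rintro ⟨b, hb, hbe⟩
          rw [Finset.mem_sdiff, Finset.mem_Icc] at hb
          omega
        constructor
        · rintro (h | h)
          · exact (ih j hjlt y hylt).mp h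
          · exact absurd h himage
        · intro h
          exact Or.inl ((ih j hjlt y hylt).mpr h)
      · set z := y - 2^r with hzdef
        have hzlt : z < 2^r := by omega
        have hyz : y = 2^r + z := by omega
        have hycb : cb (y.testBit r) = 1 := by
          rw [hyz, Nat.add_comm, testBit_high hzlt]; rfl
        rw [hycb]
        have hnotA : (y+1) ∉ A := by
          intro h
          have := hAsub h
          rw [Finset.mem_Icc] at this
          omega
        have himg : ((y+1) ∈ (Finset.Icc 1 (2^r) \ A).image (· + 2^r)) ↔ (z+1) ∉ A := by
          rw [Finset.mem_image]
          constructor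
          · rintro ⟨b, hb, hbe⟩
            rw [Finset.mem_sdiff] at hb
            have hbz : b = z + 1 := by omega
            rw [← hbz]
            exact hb.2
          · intro h
            refine ⟨z+1, ?_, by show z + 1 + 2^r = y + 1; omega⟩
            rw [Finset.mem_sdiff, Finset.mem_Icc]
            exact ⟨⟨by omega, by omega⟩, h⟩
        have hmod : Lf r (j/2) y = Lf r (j/2) z := by
          rw [← Lf_y_mod r (j/2) y, hyz, Nat.add_mod_left, Nat.mod_eq_of_lt hzlt]
        rw [hmod]
        have key : ((z+1) ∉ A) ↔ Lf r (j/2) z + 1 = 1 + cb (j.testBit 0) := by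
          rw [not_iff_comm, ih j hjlt z hzlt]
          generalize Lf r (j/2) z = u
          generalize cb (j.testBit 0) = v
          revert u v
          decide
        constructor
        · rintro (h | h)
          · exact absurd h hnotA
          · exact key.mp (himg.mp h)
        · intro h
          exact Or.inr (himg.mpr (key.mpr h))


/-- Every intersection of |S| ≤ r members of A^r (interpreted inside the universe
[2^r], so that the empty intersection is [2^r]) has size divisible by 2^(r - |S|). -/
theorem recFam_divisibility (r : ℕ) (S : Finset ℕ) (hS : S ⊆ Finset.range (2 ^ (r + 1)))
    (hcard : S.card ≤ r) :
    2 ^ (r - S.card) ∣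
      ((Finset.Icc 1 (2 ^ r)).filter fun x => ∀ i ∈ S, x ∈ (recFam r).getD i ∅).card := by
  have hcount := count_aux r S (fun i => i/2) (fun i => 1 + cb (Nat.testBit i 0))
  have hS' : ∀ i ∈ S, i < 2^(r+1) := fun i hi => Finset.mem_range.mp (hS hi)
  have hcards : ((Finset.Icc 1 (2 ^ r)).filter fun x => ∀ i ∈ S, x ∈ (recFam r).getD i ∅).card
      = ((Finset.range (2^r)).filter fun y => ∀ i ∈ S, Lf r (i/2) y = 1 + cb (i.testBit 0)).card := by
    refine Finset.card_nbij' (fun x => x - 1) (fun y => y + 1) ?_ ?_ ?_ ?_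
    · intro x hx
      simp only [Finset.mem_coe, Finset.mem_filter, Finset.mem_Icc] at hx
      simp only [Finset.mem_coe, Finset.mem_filter, Finset.mem_range]
      obtain ⟨⟨h1, h2⟩, hQ⟩ := hx
      refine ⟨by omega, fun i hi => ?_⟩
      have hx1 : x - 1 + 1 = x := by omega
      exact (mem_recFam r i (hS' i hi) (x-1) (by omega)).mp (by rw [hx1]; exact hQ i hi)
    · intro y hy
      simp only [Finset.mem_coe, Finset.mem_filter, Finset.mem_range] at hy
      simp only [Finset.mem_coe, Finset.mem_filter, Finset.mem_Icc]
      obtain ⟨h1, hQ⟩ := hy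
      refine ⟨⟨by omega, by omega⟩, fun i hi => ?_⟩
      exact (mem_recFam r i (hS' i hi) y h1).mpr (hQ i hi)
    · intro x hx
      simp only [Finset.mem_coe, Finset.mem_filter, Finset.mem_Icc] at hx
      show x - 1 + 1 = x
      omega
    · intro y hy
      show y + 1 - 1 = y
      omega
  rw [hcards]
  exact hcount
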